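/- For every integer i ≥ 0, every point a ∈ F_i, and every point b ∈ E_i, either d(a,b) ≤ Q^i or d(a,b) > Q^{i+1}/3. -/
import Mathlib


open scoped ENNReal

/-- A level-`n` chunk of the error configuration `ε`: a level-`0` chunk is a singleton `{x}`
with `x ∈ ε`; a level-`(n+1)` chunk is a disjoint union of two level-`n` chunks whose
diameter is at most `Q ^ (n+1) / 2`. -/
def IsChunk {X : Type*} [MetricSpace X] (Q : ℝ) (ε : Set X) : ℕ → Set X → Prop
  | 0, C => ∃ x ∈ ε, C = {x}
  | n + 1, C => ∃ A B : Set X, IsChunk Q ε n A ∧ IsChunk Q ε n B ∧ Disjoint A B ∧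
      C = A ∪ B ∧ Metric.diam C ≤ Q ^ (n + 1) / 2

/-- `E_n`: the union of all level-`n` chunks of `ε`. -/
def Elevel {X : Type*} [MetricSpace X] (Q : ℝ) (ε : Set X) (n : ℕ) : Set X :=
  {x | ∃ C : Set X, IsChunk Q ε n C ∧ x ∈ C}

/-- `F_i = E_i \ E_{i+1}`. -/
def Flevel {X : Type*} [MetricSpace X] (Q : ℝ) (ε : Set X) (i : ℕ) : Set X :=
  Elevel Q ε i \ Elevel Q ε (i + 1)

lemma IsChunk.subset_eps {X : Type*} [MetricSpace X] {Q : ℝ} {ε : Set X} :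
    ∀ {n : ℕ} {C : Set X}, IsChunk Q ε n C → C ⊆ ε
  | 0, _, ⟨x, hx, hC⟩ => by subst hC; simpa using hx
  | n + 1, _, ⟨A, B, hA, hB, _, hC, _⟩ => by
      subst hC; exact Set.union_subset hA.subset_eps hB.subset_eps

lemma IsChunk.diam_le {X : Type*} [MetricSpace X] {Q : ℝ} (hQ : 1 ≤ Q) {ε : Set X}
    {n : ℕ} {C : Set X} (h : IsChunk Q ε n C) : Metric.diam C ≤ Q ^ n / 2 := by
  cases n with
  | zero =>
    obtain ⟨x, _, rfl⟩ := h
    simp only [Metric.diam_singleton, pow_zero]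
    norm_num
  | succ n => obtain ⟨A, B, _, _, _, _, hd⟩ := h; exact hd

theorem statement0 {X : Type*} [MetricSpace X] (Q : ℝ) (hQ : 6 ≤ Q)
    (ε : Set X) (hε : ε.Finite) (i : ℕ) (a b : X)
    (ha : a ∈ Flevel Q ε i) (hb : b ∈ Elevel Q ε i) :
    dist a b ≤ Q ^ i ∨ dist a b > Q ^ (i + 1) / 3 := by
  obtain ⟨⟨A, hA, haA⟩, haN⟩ := ha
  obtain ⟨B, hB, hbB⟩ := hb
  have hQ1 : (1:ℝ) ≤ Q := by linarith
  have hQi : (0:ℝ) < Q ^ i := pow_pos (by linarith) i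
  rcases le_or_gt (dist a b) (Q ^ (i + 1) / 3) with hle | hgt
  · left
    by_cases hdis : Disjoint A B
    · exfalso
      apply haN
      refine ⟨A ∪ B, ⟨A, B, hA, hB, hdis, rfl, ?_⟩, Or.inl haA⟩
      calc Metric.diam (A ∪ B) ≤ Metric.diam A + dist a b + Metric.diam B :=
            Metric.diam_union haA hbB
        _ ≤ Q ^ i / 2 + Q ^ (i + 1) / 3 + Q ^ i / 2 := by
            gcongr
            exacts [hA.diam_le hQ1, hB.diam_le hQ1]
        _ ≤ Q ^ (i + 1) / 2 := by rw [pow_succ]; nlinarith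
    · obtain ⟨c, hcA, hcB⟩ := Set.not_disjoint_iff.mp hdis
      have hbA : Bornology.IsBounded A := (hε.subset hA.subset_eps).isBounded
      have hbB' : Bornology.IsBounded B := (hε.subset hB.subset_eps).isBounded
      calc dist a b ≤ dist a c + dist c b := dist_triangle a c b
        _ ≤ Metric.diam A + Metric.diam B :=
            add_le_add (Metric.dist_le_diam_of_mem hbA haA hcA)
              (Metric.dist_le_diam_of_mem hbB' hcB hbB)
        _ ≤ Q ^ i / 2 + Q ^ i / 2 := add_le_add (hA.diam_le hQ1) (hB.diam_le hQ1)
        _ = Q ^ i := by ring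
  · right; exact hgt
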